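/- (Decision tree Harris–Kleitman inequality.) Let G=(V,E) be a finite simple graph, let μ be the Bernoulli bond-percolation product measure on Ω={0,1}^E, and let (C₁,C₂) be sampled from μ×μ. Let T be any decision tree for pairs of configurations and let S=S(C₁,C₂) be the random edge set it builds. Then for any closed-upward events A,B⊆Ω, P(C₁∈A and C₁→_S C₂∈B) ≥ μ(A)·μ(B). -/
import Mathlib


namespace DTPerc

variable {E : Type*} [Fintype E] [DecidableEq E]

/-- Bernoulli product weight of a configuration. -/
noncomputable def wt (p : E → ℝ) (C : E → Bool) : ℝ :=
  ∏ e, if C e then p e else 1 - p e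

/-- Probability of an event under the Bernoulli product measure. -/
noncomputable def Pr (p : E → ℝ) (A : Set (E → Bool)) : ℝ :=
  ∑ C : E → Bool, A.indicator (wt p) C

/-- Probability of an event for an independent pair `(C₁, C₂) ~ μ × μ`. -/
noncomputable def Pr2 (p : E → ℝ) (A : Set ((E → Bool) × (E → Bool))) : ℝ :=
  ∑ x : (E → Bool) × (E → Bool), A.indicator (fun y => wt p y.1 * wt p y.2) x

/-- A decision tree for pairs of configurations: every decision node queries an edge,
decides whether it goes to `S` (`toS = true`) or to `S̄`, and has four children indexed
by the pair of revealed values of the edge in the two configurations. -/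
inductive PairTree (E : Type u) : Type u
  | leaf : PairTree E
  | node (e : E) (toS : Bool) (child : Bool → Bool → PairTree E) : PairTree E

/-- The edges queried along any root-to-leaf path are pairwise distinct
(`used` is the set of edges already queried above the current node). -/
def PairTree.valid : PairTree E → Finset E → Prop
  | .leaf, _ => True
  | .node e _ child, used =>
      e ∉ used ∧ ∀ b₁ b₂ : Bool, (child b₁ b₂).valid (insert e used)

/-- The set `S(C₁, C₂)` built by the decision tree. -/
def PairTree.buildS : PairTree E → (E → Bool) → (E → Bool) → Finset E
  | .leaf, _, _ => ∅
  | .node e toS child, C₁, C₂ =>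
      let rest := (child (C₁ e) (C₂ e)).buildS C₁ C₂
      if toS then insert e rest else rest

/-- `C₁ →_S C₂`: the configuration equal to `C₁` on `S` and to `C₂` off `S`. -/
def splice (S : Finset E) (C₁ C₂ : E → Bool) : E → Bool :=
  fun e => if e ∈ S then C₁ e else C₂ e

/-- An event is closed upward if it is preserved by opening more edges. -/
def UpwardClosed (A : Set (E → Bool)) : Prop :=
  ∀ C₁ C₂ : E → Bool, C₁ ∈ A → (∀ e, C₁ e = true → C₂ e = true) → C₂ ∈ A

open Classical Finset

/-! ### Auxiliary lemmas -/

/-- Real-valued indicator of a set. -/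
noncomputable def ind {α : Type*} (A : Set α) (x : α) : ℝ :=
  if x ∈ A then 1 else 0

lemma ind_of_mem {α : Type*} {A : Set α} {x : α} (h : x ∈ A) : ind A x = 1 := by
  simp [ind, h]

lemma ind_of_not_mem {α : Type*} {A : Set α} {x : α} (h : x ∉ A) : ind A x = 0 := by
  simp [ind, h]

lemma ind_congr {α β : Type*} {A : Set α} {B : Set β} {x : α} {y : β}
    (h : x ∈ A ↔ y ∈ B) : ind A x = ind B y := by
  by_cases hx : x ∈ A
  · rw [ind_of_mem hx, ind_of_mem (h.1 hx)]
  · rw [ind_of_not_mem hx, ind_of_not_mem (fun hy => hx (h.2 hy))]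

lemma ind_comp {α β : Type*} (A : Set α) (g : β → α) (x : β) :
    ind A (g x) = ind {y | g y ∈ A} x := ind_congr Iff.rfl

lemma ind_nonneg {α : Type*} (A : Set α) (x : α) : 0 ≤ ind A x := by
  by_cases h : x ∈ A <;> simp [ind, h]


noncomputable def wtE (p : E → ℝ) (e : E) (C : E → Bool) : ℝ :=
  ∏ x ∈ Finset.univ.erase e, (if C x then p x else 1 - p x)

lemma wt_eq_wtE (p : E → ℝ) (e : E) (C : E → Bool) :
    wt p C = (if C e then p e else 1 - p e) * wtE p e C := by
  rw [wt, wtE, ← Finset.mul_prod_erase Finset.univ _ (Finset.mem_univ e)]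

lemma wtE_update (p : E → ℝ) (e : E) (C : E → Bool) (b : Bool) :
    wtE p e (Function.update C e b) = wtE p e C :=
  Finset.prod_congr rfl fun x hx => by
    rw [Function.update_of_ne (Finset.ne_of_mem_erase hx)]

lemma wt_update (p : E → ℝ) (e : E) (C : E → Bool) (b : Bool) :
    wt p (Function.update C e b) = (if b then p e else 1 - p e) * wtE p e C := by
  rw [wt_eq_wtE p e, Function.update_self, wtE_update]

lemma wt_nonneg {p : E → ℝ} (hp : ∀ e, 0 ≤ p e ∧ p e ≤ 1) (C : E → Bool) :
    0 ≤ wt p C :=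
  Finset.prod_nonneg fun e _ => by
    rcases hp e with ⟨h0, h1⟩
    by_cases h : C e = true <;> simp [h] <;> linarith

lemma flip_invol (e : E) :
    Function.Involutive (fun C : E → Bool => Function.update C e (!(C e))) := by
  intro C; funext x
  rcases eq_or_ne x e with rfl | h
  · simp
  · simp [Function.update_of_ne h]

/-- Conditioning on the value of coordinate `e`. -/
lemma cond_sum (p : E → ℝ) (e : E) (f : (E → Bool) → ℝ) :
    ∑ C : E → Bool, wt p C * f C
      = p e * ∑ C : E → Bool, wt p C * f (Function.update C e true)
        + (1 - p e) * ∑ C : E → Bool, wt p C * f (Function.update C e false) := by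
  have hbij := (flip_invol (E := E) e).bijective
  have h1 : ∀ b : Bool, 2 * ∑ C : E → Bool, wt p C * f (Function.update C e b)
      = ∑ C : E → Bool, wtE p e C * f (Function.update C e b) := by
    intro b
    have e1 : ∑ C : E → Bool,
        ((if !(C e) then p e else 1 - p e) * wtE p e C) * f (Function.update C e b)
        = ∑ C : E → Bool, wt p C * f (Function.update C e b) := by
      refine Fintype.sum_bijective _ hbij _ _ fun C => ?_
      simp only [wt_update, Function.update_idem]
    have e2 : ∑ C : E → Bool, wt p C * f (Function.update C e b)
        = ∑ C : E → Bool,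
            ((if C e then p e else 1 - p e) * wtE p e C) * f (Function.update C e b) := by
      refine Finset.sum_congr rfl fun C _ => by rw [← wt_eq_wtE]
    calc 2 * ∑ C : E → Bool, wt p C * f (Function.update C e b)
        = (∑ C : E → Bool,
            ((if C e then p e else 1 - p e) * wtE p e C) * f (Function.update C e b))
          + ∑ C : E → Bool,
            ((if !(C e) then p e else 1 - p e) * wtE p e C) * f (Function.update C e b) := by
          rw [e1, ← e2]; ring
      _ = ∑ C : E → Bool, wtE p e C * f (Function.update C e b) := by
          rw [← Finset.sum_add_distrib]
          refine Finset.sum_congr rfl fun C _ => ?_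
          by_cases h : C e = true <;> simp [h] <;> ring
  have h2 : 2 * ∑ C : E → Bool, wt p C * f C
      = p e * ∑ C : E → Bool, wtE p e C * f (Function.update C e true)
        + (1 - p e) * ∑ C : E → Bool, wtE p e C * f (Function.update C e false) := by
    have e1 : ∑ C : E → Bool,
        ((if !(C e) then p e else 1 - p e) * wtE p e C) * f (Function.update C e (!(C e)))
        = ∑ C : E → Bool, wt p C * f C := by
      refine Fintype.sum_bijective _ hbij _ _ fun C => ?_
      simp only [wt_update]
    have e2 : ∑ C : E → Bool, wt p C * f C
        = ∑ C : E → Bool, ((if C e then p e else 1 - p e) * wtE p e C) * f C := by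
      refine Finset.sum_congr rfl fun C _ => by rw [← wt_eq_wtE]
    calc 2 * ∑ C : E → Bool, wt p C * f C
        = (∑ C : E → Bool, ((if C e then p e else 1 - p e) * wtE p e C) * f C)
          + ∑ C : E → Bool,
            ((if !(C e) then p e else 1 - p e) * wtE p e C) * f (Function.update C e (!(C e))) := by
          rw [e1, ← e2]; ring
      _ = ∑ C : E → Bool, (p e * (wtE p e C * f (Function.update C e true))
            + (1 - p e) * (wtE p e C * f (Function.update C e false))) := by
          rw [← Finset.sum_add_distrib]
          refine Finset.sum_congr rfl fun C _ => ?_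
          by_cases h : C e = true
          · have hC : Function.update C e true = C := by
              rw [← h]; exact Function.update_eq_self e C
            simp only [h, Bool.not_true, Bool.false_eq_true, if_true, if_false, hC]
            ring
          · have h' : C e = false := by simpa using h
            have hC : Function.update C e false = C := by
              rw [← h']; exact Function.update_eq_self e C
            simp only [h', Bool.not_false, Bool.false_eq_true, if_true, if_false, hC]
            ring
      _ = p e * ∑ C : E → Bool, wtE p e C * f (Function.update C e true)
            + (1 - p e) * ∑ C : E → Bool, wtE p e C * f (Function.update C e false) := by
          rw [Finset.sum_add_distrib, ← Finset.mul_sum, ← Finset.mul_sum]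
  have h1t := h1 true
  have h1f := h1 false
  rw [← h1t, ← h1f] at h2
  linarith


lemma Pr_eq (p : E → ℝ) (A : Set (E → Bool)) :
    Pr p A = ∑ C : E → Bool, wt p C * ind A C := by
  refine Finset.sum_congr rfl fun C _ => ?_
  by_cases h : C ∈ A <;> simp [ind, h]

lemma Pr_nonneg {p : E → ℝ} (hp : ∀ e, 0 ≤ p e ∧ p e ≤ 1) (A : Set (E → Bool)) :
    0 ≤ Pr p A := by
  rw [Pr_eq]
  refine Finset.sum_nonneg fun C _ => mul_nonneg (wt_nonneg hp C) (ind_nonneg A C)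

lemma Pr_mono {p : E → ℝ} (hp : ∀ e, 0 ≤ p e ∧ p e ≤ 1) {A B : Set (E → Bool)}
    (h : A ⊆ B) : Pr p A ≤ Pr p B := by
  rw [Pr_eq, Pr_eq]
  refine Finset.sum_le_sum fun C _ => ?_
  refine mul_le_mul_of_nonneg_left ?_ (wt_nonneg hp C)
  by_cases hC : C ∈ A
  · rw [ind_of_mem hC, ind_of_mem (h hC)]
  · rw [ind_of_not_mem hC]
    exact ind_nonneg B C

lemma Pr_cond (p : E → ℝ) (e : E) (A : Set (E → Bool)) :
    Pr p A = p e * Pr p {C | Function.update C e true ∈ A}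
      + (1 - p e) * Pr p {C | Function.update C e false ∈ A} := by
  have h1 : (∑ C : E → Bool, wt p C * ind A (Function.update C e true))
      = ∑ C : E → Bool, wt p C * ind {C | Function.update C e true ∈ A} C :=
    Finset.sum_congr rfl fun C _ =>
      congrArg (fun t => wt p C * t) (ind_comp A (fun C => Function.update C e true) C)
  have h2 : (∑ C : E → Bool, wt p C * ind A (Function.update C e false))
      = ∑ C : E → Bool, wt p C * ind {C | Function.update C e false ∈ A} C :=
    Finset.sum_congr rfl fun C _ =>
      congrArg (fun t => wt p C * t) (ind_comp A (fun C => Function.update C e false) C)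
  rw [Pr_eq, Pr_eq, Pr_eq, cond_sum p e (fun C => ind A C), h1, h2]

lemma Pr2_eq (p : E → ℝ) (X : Set ((E → Bool) × (E → Bool))) :
    Pr2 p X = ∑ C₁ : E → Bool, wt p C₁ *
      ∑ C₂ : E → Bool, wt p C₂ * ind X (C₁, C₂) := by
  rw [Pr2, Fintype.sum_prod_type]
  refine Finset.sum_congr rfl fun C₁ _ => ?_
  rw [Finset.mul_sum]
  refine Finset.sum_congr rfl fun C₂ _ => ?_
  by_cases h : (C₁, C₂) ∈ X
  · rw [Set.indicator_of_mem h, ind_of_mem h]; ring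
  · rw [Set.indicator_of_notMem h, ind_of_not_mem h]; ring

lemma Pr2_prod (p : E → ℝ) (A B : Set (E → Bool)) :
    Pr2 p {x : (E → Bool) × (E → Bool) | x.1 ∈ A ∧ x.2 ∈ B} = Pr p A * Pr p B := by
  rw [Pr2_eq, Pr_eq, Pr_eq, Finset.sum_mul]
  refine Finset.sum_congr rfl fun C₁ _ => ?_
  rw [Finset.mul_sum, Finset.mul_sum]
  refine Finset.sum_congr rfl fun C₂ _ => ?_
  have hind : ind {x : (E → Bool) × (E → Bool) | x.1 ∈ A ∧ x.2 ∈ B} (C₁, C₂)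
      = ind A C₁ * ind B C₂ := by
    by_cases h1 : C₁ ∈ A
    · by_cases h2 : C₂ ∈ B
      · rw [ind_of_mem (show (C₁, C₂) ∈ {x : (E → Bool) × (E → Bool) | x.1 ∈ A ∧ x.2 ∈ B} from ⟨h1, h2⟩), ind_of_mem h1, ind_of_mem h2]; ring
      · rw [ind_of_not_mem (fun hx => h2 hx.2), ind_of_not_mem h2]; ring
    · rw [ind_of_not_mem (fun hx => h1 hx.1), ind_of_not_mem h1]; ring
  rw [hind]
  ring

lemma buildS_notMem (T : PairTree E) : ∀ (u : Finset E), T.valid u →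
    ∀ (C₁ C₂ : E → Bool) (a : E), a ∈ T.buildS C₁ C₂ → a ∉ u := by
  induction T with
  | leaf => intro u _ C₁ C₂ a ha; simp [PairTree.buildS] at ha
  | node e toS child ih =>
    intro u hv C₁ C₂ a ha
    obtain ⟨he, hch⟩ := hv
    simp only [PairTree.buildS] at ha
    by_cases ht : toS
    · simp only [ht, if_true, Finset.mem_insert] at ha
      rcases ha with rfl | ha
      · exact he
      · intro hu
        exact ih _ _ _ (hch (C₁ e) (C₂ e)) C₁ C₂ a ha (Finset.mem_insert_of_mem hu)
    · simp only [ht, if_false] at ha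
      intro hu
      exact ih _ _ _ (hch (C₁ e) (C₂ e)) C₁ C₂ a ha (Finset.mem_insert_of_mem hu)

lemma buildS_congr (T : PairTree E) : ∀ (u : Finset E), T.valid u →
    ∀ (C₁ C₂ C₁' C₂' : E → Bool), (∀ a ∉ u, C₁ a = C₁' a) → (∀ a ∉ u, C₂ a = C₂' a) →
    T.buildS C₁ C₂ = T.buildS C₁' C₂' := by
  induction T with
  | leaf => intro u _ C₁ C₂ C₁' C₂' _ _; rfl
  | node e toS child ih =>
    intro u hv C₁ C₂ C₁' C₂' h1 h2
    obtain ⟨he, hch⟩ := hv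
    have he1 : C₁ e = C₁' e := h1 e he
    have he2 : C₂ e = C₂' e := h2 e he
    have hrest : (child (C₁ e) (C₂ e)).buildS C₁ C₂
        = (child (C₁' e) (C₂' e)).buildS C₁' C₂' := by
      rw [← he1, ← he2]
      exact ih _ _ _ (hch (C₁ e) (C₂ e)) C₁ C₂ C₁' C₂'
        (fun a ha => h1 a fun h => ha (Finset.mem_insert_of_mem h))
        (fun a ha => h2 a fun h => ha (Finset.mem_insert_of_mem h))
    simp only [PairTree.buildS, hrest]

lemma UC_update {A : Set (E → Bool)} (hA : UpwardClosed A) (e : E) (b : Bool) :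
    UpwardClosed {C | Function.update C e b ∈ A} := by
  intro C C' hC hle
  refine hA _ _ hC fun x hx => ?_
  rcases eq_or_ne x e with rfl | h
  · rwa [Function.update_self] at hx ⊢
  · rw [Function.update_of_ne h] at hx ⊢
    exact hle x hx

lemma UC_update_subset {A : Set (E → Bool)} (hA : UpwardClosed A) (e : E) :
    {C | Function.update C e false ∈ A} ⊆ {C | Function.update C e true ∈ A} := by
  intro C hC
  refine hA _ _ hC fun x hx => ?_
  rcases eq_or_ne x e with rfl | h
  · rw [Function.update_self]
  · rwa [Function.update_of_ne h] at hx ⊢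


lemma sum_pair_eq_Pr2 (p : E → ℝ) {X Y : Set ((E → Bool) × (E → Bool))}
    (g₁ g₂ : (E → Bool) → (E → Bool))
    (h : ∀ C₁ C₂ : E → Bool, ((g₁ C₁, g₂ C₂) ∈ X ↔ (C₁, C₂) ∈ Y)) :
    (∑ C₁ : E → Bool, wt p C₁ * ∑ C₂ : E → Bool, wt p C₂ *
        ind X (g₁ C₁, g₂ C₂))
      = Pr2 p Y := by
  rw [Pr2_eq]
  refine Finset.sum_congr rfl fun C₁ _ => ?_
  refine congrArg (fun t => wt p C₁ * t) (Finset.sum_congr rfl fun C₂ _ =>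
    congrArg (fun t => wt p C₂ * t) ?_)
  by_cases hY : (C₁, C₂) ∈ Y
  · rw [ind_of_mem ((h C₁ C₂).2 hY), ind_of_mem hY]
  · rw [ind_of_not_mem (fun hh => hY ((h C₁ C₂).1 hh)), ind_of_not_mem hY]

lemma Pr2_expand (p : E → ℝ) (e : E) (X : Set ((E → Bool) × (E → Bool))) :
    Pr2 p X =
      p e * (p e * (∑ C₁ : E → Bool, wt p C₁ * ∑ C₂ : E → Bool, wt p C₂ *
              ind X (Function.update C₁ e true, Function.update C₂ e true))
        + (1 - p e) * (∑ C₁ : E → Bool, wt p C₁ * ∑ C₂ : E → Bool, wt p C₂ *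
              ind X (Function.update C₁ e true, Function.update C₂ e false)))
      + (1 - p e) * (p e * (∑ C₁ : E → Bool, wt p C₁ * ∑ C₂ : E → Bool, wt p C₂ *
              ind X (Function.update C₁ e false, Function.update C₂ e true))
        + (1 - p e) * (∑ C₁ : E → Bool, wt p C₁ * ∑ C₂ : E → Bool, wt p C₂ *
              ind X (Function.update C₁ e false, Function.update C₂ e false))) := by
  rw [Pr2_eq]
  rw [cond_sum p e (fun C₁ => ∑ C₂ : E → Bool, wt p C₂ * ind X (C₁, C₂))]
  have inner : ∀ b₁ : Bool, (∑ C₁ : E → Bool, wt p C₁ * ∑ C₂ : E → Bool, wt p C₂ *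
        ind X (Function.update C₁ e b₁, C₂))
      = p e * (∑ C₁ : E → Bool, wt p C₁ * ∑ C₂ : E → Bool, wt p C₂ *
            ind X (Function.update C₁ e b₁, Function.update C₂ e true))
        + (1 - p e) * (∑ C₁ : E → Bool, wt p C₁ * ∑ C₂ : E → Bool, wt p C₂ *
            ind X (Function.update C₁ e b₁, Function.update C₂ e false)) := by
    intro b₁
    have step : ∀ C₁ : E → Bool, (∑ C₂ : E → Bool, wt p C₂ *
          ind X (Function.update C₁ e b₁, C₂))
        = p e * (∑ C₂ : E → Bool, wt p C₂ *
              ind X (Function.update C₁ e b₁, Function.update C₂ e true))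
          + (1 - p e) * (∑ C₂ : E → Bool, wt p C₂ *
              ind X (Function.update C₁ e b₁, Function.update C₂ e false)) :=
      fun C₁ => cond_sum p e (fun C₂ => ind X (Function.update C₁ e b₁, C₂))
    calc (∑ C₁ : E → Bool, wt p C₁ * ∑ C₂ : E → Bool, wt p C₂ *
          ind X (Function.update C₁ e b₁, C₂))
        = ∑ C₁ : E → Bool,
            (p e * (wt p C₁ * ∑ C₂ : E → Bool, wt p C₂ *
              ind X (Function.update C₁ e b₁, Function.update C₂ e true))
            + (1 - p e) * (wt p C₁ * ∑ C₂ : E → Bool, wt p C₂ *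
              ind X (Function.update C₁ e b₁, Function.update C₂ e false))) :=
          Finset.sum_congr rfl fun C₁ _ => by rw [step C₁]; ring
      _ = _ := by rw [Finset.sum_add_distrib, ← Finset.mul_sum, ← Finset.mul_sum]
  rw [inner true, inner false]

lemma arith_S (pe a1 a0 b1 b0 S11 S10 S01 S00 : ℝ)
    (hp0 : 0 ≤ pe) (hp1 : 0 ≤ 1 - pe)
    (ha : a0 ≤ a1) (hb : b0 ≤ b1)
    (h11 : S11 ≥ a1 * b1) (h10 : S10 ≥ a1 * b1)
    (h01 : S01 ≥ a0 * b0) (h00 : S00 ≥ a0 * b0) :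
    (pe * a1 + (1 - pe) * a0) * (pe * b1 + (1 - pe) * b0)
      ≤ pe * (pe * S11 + (1 - pe) * S10) + (1 - pe) * (pe * S01 + (1 - pe) * S00) := by
  nlinarith [mul_nonneg (mul_nonneg hp0 hp0) (sub_nonneg.2 (ge_iff_le.1 h11)),
    mul_nonneg (mul_nonneg hp0 hp1) (sub_nonneg.2 (ge_iff_le.1 h10)),
    mul_nonneg (mul_nonneg hp1 hp0) (sub_nonneg.2 (ge_iff_le.1 h01)),
    mul_nonneg (mul_nonneg hp1 hp1) (sub_nonneg.2 (ge_iff_le.1 h00)),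
    mul_nonneg (mul_nonneg (mul_nonneg hp0 hp1) (sub_nonneg.2 ha)) (sub_nonneg.2 hb)]

lemma arith_Sbar (pe a1 a0 b1 b0 S11 S10 S01 S00 : ℝ)
    (hp0 : 0 ≤ pe) (hp1 : 0 ≤ 1 - pe)
    (h11 : S11 ≥ a1 * b1) (h10 : S10 ≥ a1 * b0)
    (h01 : S01 ≥ a0 * b1) (h00 : S00 ≥ a0 * b0) :
    (pe * a1 + (1 - pe) * a0) * (pe * b1 + (1 - pe) * b0)
      ≤ pe * (pe * S11 + (1 - pe) * S10) + (1 - pe) * (pe * S01 + (1 - pe) * S00) := by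
  nlinarith [mul_nonneg (mul_nonneg hp0 hp0) (sub_nonneg.2 (ge_iff_le.1 h11)),
    mul_nonneg (mul_nonneg hp0 hp1) (sub_nonneg.2 (ge_iff_le.1 h10)),
    mul_nonneg (mul_nonneg hp1 hp0) (sub_nonneg.2 (ge_iff_le.1 h01)),
    mul_nonneg (mul_nonneg hp1 hp1) (sub_nonneg.2 (ge_iff_le.1 h00))]

lemma key (p : E → ℝ) (hp : ∀ e, 0 ≤ p e ∧ p e ≤ 1) :
    ∀ (T : PairTree E) (used : Finset E), T.valid used →
    ∀ (A B : Set (E → Bool)), UpwardClosed A → UpwardClosed B →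
    Pr2 p {x | x.1 ∈ A ∧ splice (T.buildS x.1 x.2) x.1 x.2 ∈ B} ≥ Pr p A * Pr p B := by
  intro T
  induction T with
  | leaf =>
    intro used _ A B hA hB
    have hset : {x : (E → Bool) × (E → Bool) |
          x.1 ∈ A ∧ splice (PairTree.leaf.buildS x.1 x.2) x.1 x.2 ∈ B}
        = {x : (E → Bool) × (E → Bool) | x.1 ∈ A ∧ x.2 ∈ B} := by
      ext x
      have : splice (PairTree.leaf.buildS x.1 x.2) x.1 x.2 = x.2 := by
        funext a; simp [splice, PairTree.buildS]
      simp only [Set.mem_setOf_eq, this]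
    rw [hset, Pr2_prod]
  | node e toS child ih =>
    intro used hT A B hA hB
    obtain ⟨he, hch⟩ := hT
    have hp0 : 0 ≤ p e := (hp e).1
    have hp1 : 0 ≤ 1 - p e := by linarith [(hp e).2]
    -- membership rewriting
    have hmemiff : ∀ (b₁ b₂ : Bool) (C₁ C₂ : E → Bool),
        ((Function.update C₁ e b₁, Function.update C₂ e b₂) ∈
          {x : (E → Bool) × (E → Bool) | x.1 ∈ A ∧
            splice ((PairTree.node e toS child).buildS x.1 x.2) x.1 x.2 ∈ B})
        ↔ ((C₁, C₂) ∈ {x : (E → Bool) × (E → Bool) |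
            x.1 ∈ {C | Function.update C e b₁ ∈ A} ∧
            splice ((child b₁ b₂).buildS x.1 x.2) x.1 x.2 ∈
              {C | Function.update C e (if toS then b₁ else b₂) ∈ B}}) := by
      intro b₁ b₂ C₁ C₂
      have hR : (child b₁ b₂).buildS (Function.update C₁ e b₁) (Function.update C₂ e b₂)
          = (child b₁ b₂).buildS C₁ C₂ := by
        refine buildS_congr _ _ (hch b₁ b₂) _ _ _ _ ?_ ?_ <;>
          · intro a ha
            exact Function.update_of_ne
              (fun h => ha (by rw [h]; exact Finset.mem_insert_self e used)) _ _
      have heR : e ∉ (child b₁ b₂).buildS C₁ C₂ := fun h =>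
        buildS_notMem _ _ (hch b₁ b₂) C₁ C₂ e h (Finset.mem_insert_self e used)
      have hbuild : (PairTree.node e toS child).buildS
            (Function.update C₁ e b₁) (Function.update C₂ e b₂)
          = (if toS then insert e ((child b₁ b₂).buildS C₁ C₂)
              else (child b₁ b₂).buildS C₁ C₂) := by
        simp only [PairTree.buildS, Function.update_self, hR]
      have hsplice : splice (if toS then insert e ((child b₁ b₂).buildS C₁ C₂)
              else (child b₁ b₂).buildS C₁ C₂)
            (Function.update C₁ e b₁) (Function.update C₂ e b₂)
          = Function.update (splice ((child b₁ b₂).buildS C₁ C₂) C₁ C₂) e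
              (if toS then b₁ else b₂) := by
        funext a
        rcases eq_or_ne a e with rfl | ha
        · by_cases ht : toS
          · simp [splice, ht]
          · simp [splice, ht, heR]
        · have hmem : (a ∈ (if toS then insert e ((child b₁ b₂).buildS C₁ C₂)
                else (child b₁ b₂).buildS C₁ C₂)) ↔ a ∈ (child b₁ b₂).buildS C₁ C₂ := by
            by_cases ht : toS <;> simp [ht, Finset.mem_insert, ha]
          simp only [splice, Function.update_of_ne ha]
          by_cases hm : a ∈ (child b₁ b₂).buildS C₁ C₂
          · rw [if_pos (hmem.2 hm), if_pos hm]
          · rw [if_neg (fun h => hm (hmem.1 h)), if_neg hm]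
      simp only [Set.mem_setOf_eq, hbuild, hsplice]
    -- expansion and the four child quantities
    have expand := Pr2_expand p e {x : (E → Bool) × (E → Bool) | x.1 ∈ A ∧
      splice ((PairTree.node e toS child).buildS x.1 x.2) x.1 x.2 ∈ B}
    have hS : ∀ b₁ b₂ : Bool, (∑ C₁ : E → Bool, wt p C₁ * ∑ C₂ : E → Bool, wt p C₂ *
          ind {x : (E → Bool) × (E → Bool) | x.1 ∈ A ∧
              splice ((PairTree.node e toS child).buildS x.1 x.2) x.1 x.2 ∈ B}
            (Function.update C₁ e b₁, Function.update C₂ e b₂))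
        ≥ Pr p {C | Function.update C e b₁ ∈ A} *
            Pr p {C | Function.update C e (if toS then b₁ else b₂) ∈ B} := by
      intro b₁ b₂
      exact le_trans
        (ih b₁ b₂ (insert e used) (hch b₁ b₂) _ _ (UC_update hA e b₁) (UC_update hB e _))
        (le_of_eq (sum_pair_eq_Pr2 p _ _ (hmemiff b₁ b₂)).symm)
    -- conditioning of Pr and monotonicity
    have hPA := Pr_cond p e A
    have hPB := Pr_cond p e B
    have haM : Pr p {C | Function.update C e false ∈ A}
        ≤ Pr p {C | Function.update C e true ∈ A} := Pr_mono hp (UC_update_subset hA e)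
    have hbM : Pr p {C | Function.update C e false ∈ B}
        ≤ Pr p {C | Function.update C e true ∈ B} := Pr_mono hp (UC_update_subset hB e)
    have ha0 : 0 ≤ Pr p {C | Function.update C e false ∈ A} := Pr_nonneg hp _
    have hb0 : 0 ≤ Pr p {C | Function.update C e false ∈ B} := Pr_nonneg hp _
    rw [ge_iff_le, hPA, hPB, expand]
    cases toS
    · have h11 := hS true true
      have h10 := hS true false
      have h01 := hS false true
      have h00 := hS false false
      simp only [Bool.false_eq_true, if_false] at h11 h10 h01 h00
      exact arith_Sbar _ _ _ _ _ _ _ _ _ hp0 hp1 h11 h10 h01 h00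
    · have h11 := hS true true
      have h10 := hS true false
      have h01 := hS false true
      have h00 := hS false false
      simp only [if_pos rfl] at h11 h10 h01 h00
      exact arith_S _ _ _ _ _ _ _ _ _ hp0 hp1 haM hbM h11 h10 h01 h00


/-- Decision tree Harris–Kleitman inequality. -/
theorem decision_tree_HK
    {V : Type*} [Fintype V] [DecidableEq V] (G : SimpleGraph V) [DecidableRel G.Adj]
    (p : G.edgeSet → ℝ) (hp : ∀ e, 0 ≤ p e ∧ p e ≤ 1)
    (T : PairTree G.edgeSet) (hT : T.valid ∅)
    (A B : Set (G.edgeSet → Bool)) (hA : UpwardClosed A) (hB : UpwardClosed B) :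
    Pr2 p {x | x.1 ∈ A ∧ splice (T.buildS x.1 x.2) x.1 x.2 ∈ B} ≥ Pr p A * Pr p B :=
  key p hp T ∅ hT A B hA hB

end DTPerc
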